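/- Let p and q be probability mass functions on a finite type α and let m = (p+q)/2 be their midpoint mixture. Then for every subset E ⊆ α, |p(E) − q(E)| ≤ √(KL(p‖m) + KL(q‖m)); equivalently, |p(E) − q(E)| ≤ √(2 · JS(p,q)). -/

import Mathlib

open Finset

open Classical in
/-- Kullback–Leibler divergence of finitely supported pmfs (natural logarithm),
restricted to the support of `p`. -/
noncomputable def KL {α : Type*} [Fintype α] (p q : α → ℝ) : ℝ :=
  ∑ x, if 0 < p x then p x * Real.log (p x / q x) else 0

/-- Jensen–Shannon divergence of finitely supported pmfs. -/
noncomputable def JS {α : Type*} [Fintype α] (p q : α → ℝ) : ℝ :=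
  KL p (fun x => (p x + q x) / 2) / 2 + KL q (fun x => (p x + q x) / 2) / 2

section Aux

lemma hF (u : ℝ) (hu0 : 0 ≤ u) (hu1 : u < 1) :
    2*u ≤ Real.log (1+u) - Real.log (1-u) := by
  have key : MonotoneOn (fun t : ℝ => Real.log (1+t) - Real.log (1-t) - 2*t) (Set.Icc 0 u) := by
    apply monotoneOn_of_deriv_nonneg (convex_Icc 0 u)
    · apply ContinuousOn.sub (ContinuousOn.sub ?_ ?_) (by fun_prop)
      · apply Real.continuousOn_log.comp (by fun_prop)
        intro t ht
        simp only [Set.mem_Icc] at ht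
        simp only [Set.mem_compl_iff, Set.mem_singleton_iff]
        nlinarith [ht.1]
      · apply Real.continuousOn_log.comp (by fun_prop)
        intro t ht
        simp only [Set.mem_Icc] at ht
        simp only [Set.mem_compl_iff, Set.mem_singleton_iff]
        nlinarith [ht.2]
    · intro t ht
      rw [interior_Icc, Set.mem_Ioo] at ht
      have h1 : (1:ℝ)+t ≠ 0 := by nlinarith [ht.1]
      have h2 : (1:ℝ)-t ≠ 0 := by nlinarith [ht.2, hu1]
      apply DifferentiableAt.differentiableWithinAt
      apply DifferentiableAt.sub (DifferentiableAt.sub ?_ ?_) (by fun_prop)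
      · exact (Real.differentiableAt_log h1).comp t (by fun_prop)
      · exact (Real.differentiableAt_log h2).comp t (by fun_prop)
    · intro t ht
      rw [interior_Icc, Set.mem_Ioo] at ht
      have h1 : (0:ℝ) < 1+t := by nlinarith [ht.1]
      have h2 : (0:ℝ) < 1-t := by nlinarith [ht.2, hu1]
      have d1 : HasDerivAt (fun s : ℝ => Real.log (1+s)) (1/(1+t)) t := by
        have := (Real.hasDerivAt_log h1.ne').comp t ((hasDerivAt_id t).const_add 1)
        simpa [Function.comp_def] using this
      have d2 : HasDerivAt (fun s : ℝ => Real.log (1-s)) (-(1/(1-t))) t := by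
        have := (Real.hasDerivAt_log h2.ne').comp t ((hasDerivAt_id t).neg.const_add 1)
        simp [Function.comp_def] at this
        rw [one_div]
        exact this
      have d : HasDerivAt (fun s : ℝ => Real.log (1+s) - Real.log (1-s) - 2*s)
          (1/(1+t) - (-(1/(1-t))) - 2) t := ((d1.sub d2).sub (by simpa using (hasDerivAt_id t).const_mul 2))
      rw [d.deriv]
      have : 1/(1+t) - (-(1/(1-t))) - 2 = 2*t^2/((1+t)*(1-t)) := by field_simp; ring
      rw [this]
      positivity
  have h0 : (0:ℝ) ∈ Set.Icc 0 u := Set.mem_Icc.mpr ⟨le_refl _, hu0⟩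
  have hu : u ∈ Set.Icc (0:ℝ) u := Set.mem_Icc.mpr ⟨hu0, le_refl _⟩
  have := key h0 hu hu0
  simp at this
  linarith



lemma hP (u : ℝ) (hu0 : 0 ≤ u) (hu1 : u < 1) :
    u^2 ≤ (1+u) * Real.log (1+u) + (1-u) * Real.log (1-u) := by
  have key : MonotoneOn (fun t : ℝ => (1+t) * Real.log (1+t) + (1-t) * Real.log (1-t) - t^2)
      (Set.Icc 0 u) := by
    apply monotoneOn_of_deriv_nonneg (convex_Icc 0 u)
    · apply ContinuousOn.sub (ContinuousOn.add ?_ ?_) (by fun_prop)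
      · apply ContinuousOn.mul (by fun_prop)
        apply Real.continuousOn_log.comp (by fun_prop)
        intro t ht
        simp only [Set.mem_Icc] at ht
        simp only [Set.mem_compl_iff, Set.mem_singleton_iff]
        nlinarith [ht.1]
      · apply ContinuousOn.mul (by fun_prop)
        apply Real.continuousOn_log.comp (by fun_prop)
        intro t ht
        simp only [Set.mem_Icc] at ht
        simp only [Set.mem_compl_iff, Set.mem_singleton_iff]
        nlinarith [ht.2]
    · intro t ht
      rw [interior_Icc, Set.mem_Ioo] at ht
      have h1 : (1:ℝ)+t ≠ 0 := by nlinarith [ht.1]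
      have h2 : (1:ℝ)-t ≠ 0 := by nlinarith [ht.2, hu1]
      apply DifferentiableAt.differentiableWithinAt
      apply DifferentiableAt.sub (DifferentiableAt.add ?_ ?_) (by fun_prop)
      · exact (differentiableAt_id.const_add 1).mul
          ((Real.differentiableAt_log h1).comp t (by fun_prop))
      · exact ((differentiableAt_id.neg.const_add 1)).mul
          ((Real.differentiableAt_log h2).comp t (by fun_prop))
    · intro t ht
      rw [interior_Icc, Set.mem_Ioo] at ht
      have h1 : (0:ℝ) < 1+t := by nlinarith [ht.1]
      have h2 : (0:ℝ) < 1-t := by nlinarith [ht.2, hu1]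
      have d1 : HasDerivAt (fun s : ℝ => Real.log (1+s)) (1/(1+t)) t := by
        simpa [Function.comp_def] using (Real.hasDerivAt_log h1.ne').comp t ((hasDerivAt_id t).const_add 1)
      have d2 : HasDerivAt (fun s : ℝ => Real.log (1-s)) (-(1/(1-t))) t := by
        have := (Real.hasDerivAt_log h2.ne').comp t ((hasDerivAt_id t).neg.const_add 1)
        simp [Function.comp_def] at this
        rw [one_div]
        exact this
      have e1 : HasDerivAt (fun s : ℝ => (1+s) * Real.log (1+s))
          (1 * Real.log (1+t) + (1+t) * (1/(1+t))) t :=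
        HasDerivAt.mul (by simpa using (hasDerivAt_id t).const_add 1) d1
      have e2 : HasDerivAt (fun s : ℝ => (1-s) * Real.log (1-s))
          ((-1) * Real.log (1-t) + (1-t) * (-(1/(1-t)))) t :=
        HasDerivAt.mul ((hasDerivAt_id' t).const_sub 1) d2
      have d : HasDerivAt (fun s : ℝ => (1+s) * Real.log (1+s) + (1-s) * Real.log (1-s) - s^2)
          ((1 * Real.log (1+t) + (1+t) * (1/(1+t))) +
            ((-1) * Real.log (1-t) + (1-t) * (-(1/(1-t)))) - 2*t) t := by
        apply (e1.add e2).sub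
        simpa using (hasDerivAt_pow 2 t)
      rw [d.deriv]
      have hFt := hF t (le_of_lt ht.1) (lt_trans ht.2 hu1)
      have hh1 : (1+t) * (1/(1+t)) = 1 := by field_simp
      have hh2 : (1-t) * (-(1/(1-t))) = -1 := by field_simp
      rw [hh1, hh2]
      linarith
  have h0 : (0:ℝ) ∈ Set.Icc 0 u := Set.mem_Icc.mpr ⟨le_refl _, hu0⟩
  have hu : u ∈ Set.Icc (0:ℝ) u := Set.mem_Icc.mpr ⟨hu0, le_refl _⟩
  have := key h0 hu hu0
  simp at this
  linarith



lemma hP2 (u : ℝ) (hl : -1 < u) (hr : u < 1) :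
    u^2 ≤ (1+u) * Real.log (1+u) + (1-u) * Real.log (1-u) := by
  rcases le_or_gt 0 u with h | h
  · exact hP u h hr
  · have := hP (-u) (by linarith) (by linarith)
    have e1 : (1 + -u) = 1 - u := by ring
    have e2 : (1 - -u) = 1 + u := by ring
    rw [e1, e2, neg_pow] at this
    simp at this ⊢
    linarith

lemma pointwise (a b : ℝ) (ha : 0 ≤ a) (hb : 0 ≤ b) :
    (a-b)^2 / (2*(a+b)) ≤
      (if 0 < a then a * Real.log (a / ((a+b)/2)) else 0) +
      (if 0 < b then b * Real.log (b / ((a+b)/2)) else 0) := by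
  have log2 : (0.6931471803:ℝ) < Real.log 2 := Real.log_two_gt_d9
  rcases eq_or_lt_of_le ha with ha0 | hapos
  · rcases eq_or_lt_of_le hb with hb0 | hbpos
    · simp [← ha0, ← hb0]
    · rw [if_neg (by rw [← ha0]; exact lt_irrefl 0), if_pos hbpos, ← ha0]
      have e : b / ((0+b)/2) = 2 := by field_simp; ring
      rw [e]
      have : (0-b)^2/(2*(0+b)) = b/2 := by field_simp; ring
      rw [this]
      nlinarith
  · rcases eq_or_lt_of_le hb with hb0 | hbpos
    · rw [if_pos hapos, if_neg (by rw [← hb0]; exact lt_irrefl 0), ← hb0]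
      have e : a / ((a+0)/2) = 2 := by field_simp; ring
      rw [e]
      have : (a-0)^2/(2*(a+0)) = a/2 := by field_simp; ring
      rw [this]
      nlinarith
    · have hs : 0 < a + b := by linarith
      set u := (a-b)/(a+b) with hu
      have hu1 : u < 1 := by rw [hu, div_lt_one hs]; linarith
      have hu2 : -1 < u := by rw [hu, lt_div_iff₀ hs]; linarith
      have key := hP2 u hu2 hu1
      have e1 : a / ((a+b)/2) = 1 + u := by rw [hu]; field_simp; ring
      have e2 : b / ((a+b)/2) = 1 - u := by rw [hu]; field_simp; ring
      have ea : a = (a+b)*(1+u)/2 := by rw [hu]; field_simp; ring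
      have eb : b = (a+b)*(1-u)/2 := by rw [hu]; field_simp; ring
      have erhs : (a-b)^2/(2*(a+b)) = (a+b)*u^2/2 := by rw [hu]; field_simp
      rw [if_pos hapos, if_pos hbpos, e1, e2, erhs]
      set L1 := Real.log (1+u)
      set L2 := Real.log (1-u)
      have hstep : a * L1 + b * L2 = (a+b)/2 * ((1+u)*L1 + (1-u)*L2) := by
        linear_combination L1 * ea + L2 * eb
      rw [hstep]
      have := mul_le_mul_of_nonneg_left key (by positivity : (0:ℝ) ≤ (a+b)/2)
      linarith

end Aux

/-- Pinsker-type bound via the Jensen–Shannon divergence. -/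
theorem stmt3 {α : Type*} [Fintype α] (p q : α → ℝ)
    (hp0 : ∀ x, 0 ≤ p x) (hq0 : ∀ x, 0 ≤ q x)
    (hp1 : ∑ x, p x = 1) (hq1 : ∑ x, q x = 1) (E : Finset α) :
    |(∑ x ∈ E, p x) - ∑ x ∈ E, q x| ≤
        Real.sqrt (KL p (fun x => (p x + q x) / 2) + KL q (fun x => (p x + q x) / 2)) ∧
      |(∑ x ∈ E, p x) - ∑ x ∈ E, q x| ≤ Real.sqrt (2 * JS p q) := by
  classical
  set K := KL p (fun x => (p x + q x) / 2) + KL q (fun x => (p x + q x) / 2) with hK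
  set δ := |(∑ x ∈ E, p x) - ∑ x ∈ E, q x| with hδ
  -- Step 1: sum of pointwise bounds
  have hS : ∑ x, (p x - q x)^2 / (2*(p x + q x)) ≤ K := by
    rw [hK, KL, KL, ← Finset.sum_add_distrib]
    apply Finset.sum_le_sum
    intro x _
    have h := pointwise (p x) (q x) (hp0 x) (hq0 x)
    have h2 := pointwise (q x) (p x) (hq0 x) (hp0 x)
    have e : (q x - p x)^2 / (2*(q x + p x)) = (p x - q x)^2 / (2*(p x + q x)) := by
      ring_nf
    rw [e] at h2
    have comm : q x + p x = p x + q x := by ring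
    rw [comm] at h2
    convert h using 2 <;> norm_num
  -- Step 2: Cauchy-Schwarz
  have habs : ∀ x : α, |p x - q x| =
      (|p x - q x| / Real.sqrt (2*(p x + q x))) * Real.sqrt (2*(p x + q x)) := by
    intro x
    by_cases h : p x + q x = 0
    · have hp : p x = 0 := le_antisymm (by linarith [hq0 x, h.le]) (hp0 x)
      have hq : q x = 0 := by linarith [h]
      simp [hp, hq]
    · have hpos : 0 < p x + q x := lt_of_le_of_ne (by linarith [hp0 x, hq0 x]) (Ne.symm h)
      rw [div_mul_cancel₀]
      exact Real.sqrt_ne_zero'.mpr (by linarith)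
  have hCS := Finset.sum_mul_sq_le_sq_mul_sq Finset.univ
      (fun x => |p x - q x| / Real.sqrt (2*(p x + q x)))
      (fun x => Real.sqrt (2*(p x + q x)))
  have hf2 : ∀ x : α, (|p x - q x| / Real.sqrt (2*(p x + q x)))^2
      = (p x - q x)^2 / (2*(p x + q x)) := by
    intro x
    rw [div_pow, sq_abs, Real.sq_sqrt (by linarith [hp0 x, hq0 x] : (0:ℝ) ≤ 2*(p x + q x))]
  have hg2 : ∑ x : α, (Real.sqrt (2*(p x + q x)))^2 = 4 := by
    have : ∀ x : α, (Real.sqrt (2*(p x + q x)))^2 = 2 * p x + 2 * q x := by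
      intro x
      rw [Real.sq_sqrt (by linarith [hp0 x, hq0 x] : (0:ℝ) ≤ 2*(p x + q x))]
      ring
    rw [Finset.sum_congr rfl (fun x _ => this x), Finset.sum_add_distrib,
      ← Finset.mul_sum, ← Finset.mul_sum, hp1, hq1]
    norm_num
  simp only [← habs, hf2] at hCS
  rw [hg2] at hCS
  -- hCS : (∑ x, |p x - q x|)^2 ≤ (∑ x, (p x - q x)^2/(2*(p x+q x))) * 4
  -- Step 3: event bound
  have hsum0 : ∑ x : α, (p x - q x) = 0 := by
    rw [Finset.sum_sub_distrib, hp1, hq1]; ring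
  have hEc : (∑ x ∈ E, (p x - q x)) + (∑ x ∈ Eᶜ, (p x - q x)) = 0 := by
    rw [Finset.sum_add_sum_compl]; exact hsum0
  have hδe : (∑ x ∈ E, p x) - ∑ x ∈ E, q x = ∑ x ∈ E, (p x - q x) :=
    (Finset.sum_sub_distrib _ _).symm
  have h2δ : 2 * δ ≤ ∑ x : α, |p x - q x| := by
    have h1 : |∑ x ∈ E, (p x - q x)| ≤ ∑ x ∈ E, |p x - q x| :=
      Finset.abs_sum_le_sum_abs _ _
    have h2 : |∑ x ∈ Eᶜ, (p x - q x)| ≤ ∑ x ∈ Eᶜ, |p x - q x| :=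
      Finset.abs_sum_le_sum_abs _ _
    have h3 : (∑ x ∈ E, |p x - q x|) + (∑ x ∈ Eᶜ, |p x - q x|) = ∑ x : α, |p x - q x| :=
      Finset.sum_add_sum_compl _ _
    have h4 : |∑ x ∈ Eᶜ, (p x - q x)| = |∑ x ∈ E, (p x - q x)| := by
      have : ∑ x ∈ Eᶜ, (p x - q x) = -(∑ x ∈ E, (p x - q x)) := by linarith
      rw [this, abs_neg]
    rw [hδ, hδe]
    calc 2 * |∑ x ∈ E, (p x - q x)|
        = |∑ x ∈ E, (p x - q x)| + |∑ x ∈ Eᶜ, (p x - q x)| := by rw [h4]; ring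
      _ ≤ (∑ x ∈ E, |p x - q x|) + (∑ x ∈ Eᶜ, |p x - q x|) := by linarith
      _ = ∑ x : α, |p x - q x| := h3
  -- Step 4: conclude δ^2 ≤ K
  have hδ0 : 0 ≤ δ := abs_nonneg _
  have hδ2 : δ^2 ≤ K := by
    have hsq : (2*δ)^2 ≤ (∑ x : α, |p x - q x|)^2 := by
      apply pow_le_pow_left₀ (by linarith) h2δ
    have hexp : (2*δ)^2 = 4 * δ^2 := by ring
    have t1 : (∑ x : α, (p x - q x) ^ 2 / (2 * (p x + q x))) * 4 ≤ K * 4 := by linarith [hS]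
    have t2 : (∑ x : α, |p x - q x|) ^ 2 ≤ K * 4 := le_trans hCS t1
    linarith [hsq, hexp, t2]
  have hfirst : δ ≤ Real.sqrt K := by
    exact (Real.le_sqrt hδ0 ((sq_nonneg δ).trans hδ2)).mpr hδ2
  refine ⟨hfirst, ?_⟩
  have : 2 * JS p q = K := by rw [JS, hK]; ring
  rw [this]
  exact hfirst
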